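/- arXiv:0910.5396 — 2 statements merged into one kernel-verified Lean document; each statement's English description precedes it below -/
import Mathlib

section
/- If B(X) contains a cycle of length greater than 4, then each of Δ(X) and Γ(X) contains a cycle. -/
open SimpleGraph

/-- The set of primes dividing at least one element of `X`. -/
def rho (X : Set ℕ) : Set ℕ := {p | p.Prime ∧ ∃ x ∈ X, p ∣ x}

/-- `X* = X \ {1}`. -/
def Xstar (X : Set ℕ) : Set ℕ := X \ {1}

/-- The bipartite divisor graph `B(X)` on the disjoint union `ρ(X) ⊔ X*`:
`p ∈ ρ(X)` and `x ∈ X*` are adjacent iff `p ∣ x`. -/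
def BGraph (X : Set ℕ) : SimpleGraph (↥(rho X) ⊕ ↥(Xstar X)) where
  Adj u v :=
    match u, v with
    | Sum.inl p, Sum.inr x => (p : ℕ) ∣ (x : ℕ)
    | Sum.inr x, Sum.inl p => (p : ℕ) ∣ (x : ℕ)
    | _, _ => False
  symm := by constructor; rintro (p | x) (q | y) h <;> exact h
  loopless := by constructor; rintro (p | x) h <;> exact h

/-- The prime vertex graph `Δ(X)` on `ρ(X)`: distinct primes `p, q` are
adjacent iff `p*q` divides some element of `X`. -/
def DeltaGraph (X : Set ℕ) : SimpleGraph ↥(rho X) where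
  Adj p q := p ≠ q ∧ ∃ x ∈ X, (p : ℕ) * (q : ℕ) ∣ x
  symm := by
    constructor; rintro p q ⟨hne, x, hx, hdvd⟩
    exact ⟨hne.symm, x, hx, by rwa [mul_comm]⟩
  loopless := by constructor; rintro p ⟨hne, -⟩; exact hne rfl

/-- The common divisor graph `Γ(X)` on `X*`: distinct `x, y` are adjacent
iff `gcd(x, y) > 1`. -/
def GammaGraph (X : Set ℕ) : SimpleGraph ↥(Xstar X) where
  Adj x y := x ≠ y ∧ 1 < Nat.gcd (x : ℕ) (y : ℕ)
  symm := by
    constructor; rintro x y ⟨hne, h⟩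
    exact ⟨hne.symm, by rwa [Nat.gcd_comm]⟩
  loopless := by constructor; rintro x ⟨hne, -⟩; exact hne rfl


lemma no_edge_end_start {V : Type*} {G : SimpleGraph V} {a b : V} (q : G.Walk a b)
    (hq : q.support.Nodup) (h2 : 2 ≤ q.length) : s(b, a) ∉ q.edges := by
  cases q with
  | nil => simp
  | @cons _ c _ h q' =>
    rw [Walk.support_cons, List.nodup_cons] at hq
    obtain ⟨ha, hnd⟩ := hq
    rw [Walk.edges_cons]
    intro hmem
    rcases List.mem_cons.mp hmem with heq | hmem'
    · rw [Sym2.eq_iff] at heq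
      rcases heq with ⟨hba, _⟩ | ⟨hba', haa⟩
      · exact ha (hba ▸ q'.end_mem_support)
      · subst hba'
        cases q' with
        | nil => simp [Walk.length_cons] at h2
        | cons h'' q'' =>
          rw [Walk.support_cons, List.nodup_cons] at hnd
          exact hnd.1 q''.end_mem_support
    · exact ha (Walk.snd_mem_support_of_mem_edges q' hmem')

lemma closed_isCycle {V : Type*} {G : SimpleGraph V} {v : V} (d : G.Walk v v)
    (h3 : 3 ≤ d.length) (hnd : d.support.tail.Nodup) : d.IsCycle := by
  cases d with
  | nil => simp at h3
  | cons h d' =>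
    rw [Walk.cons_isCycle_iff]
    have hs : d'.support.Nodup := by simpa using hnd
    refine ⟨(Walk.isPath_def _).mpr hs, ?_⟩
    refine no_edge_end_start d' hs ?_
    rw [Walk.length_cons] at h3; omega

lemma projL (X : Set ℕ) {u v : ↥(rho X) ⊕ ↥(Xstar X)} (w : (BGraph X).Walk u v)
    (ht : w.IsTrail) :
    ∀ q : ↥(rho X), v = Sum.inl q →
      (∀ p, u = Sum.inl p → ∃ d : (DeltaGraph X).Walk p q,
        2 * d.length = w.length ∧ d.support = w.support.filterMap Sum.getLeft?) ∧
      (∀ x, u = Sum.inr x → ∃ (p' : ↥(rho X)) (d : (DeltaGraph X).Walk p' q),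
        (↑p' : ℕ) ∣ (↑x : ℕ) ∧ s(Sum.inr x, Sum.inl p') ∈ w.edges ∧
        2 * d.length + 1 = w.length ∧ d.support = w.support.filterMap Sum.getLeft?) := by
  induction w with
  | nil =>
    intro q hq
    constructor
    · intro p hp
      subst hq
      obtain rfl : q = p := Sum.inl.inj hp
      exact ⟨Walk.nil, by simp, by simp⟩
    · intro x hx
      rw [hx] at hq
      simp at hq
  | @cons u u' v h w ih =>
    intro q hq
    have ih' := ih ht.of_cons q hq
    constructor
    · rintro p rfl
      rcases u' with p2 | x
      · exact h.elim
      · obtain ⟨p', d, hdvd, hedge, hlen, hsup⟩ := ih'.2 x rfl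
        have hpp' : p ≠ p' := by
          rintro rfl
          have hmem : s(Sum.inl p, Sum.inr x) ∈ w.edges := by
            rwa [Sym2.eq_swap] at hedge
          exact ((Walk.isTrail_cons h w).mp ht).2 hmem
        have hadj : (DeltaGraph X).Adj p p' := by
          refine ⟨hpp', ↑x, x.2.1, ?_⟩
          have hco : Nat.Coprime ↑p ↑p' :=
            (Nat.coprime_primes p.2.1 p'.2.1).mpr (Subtype.coe_injective.ne hpp')
          exact hco.mul_dvd_of_dvd_of_dvd h hdvd
        refine ⟨Walk.cons hadj d, ?_, ?_⟩
        · rw [Walk.length_cons, Walk.length_cons]; omega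
        · simp [Walk.support_cons, hsup]
    · rintro x rfl
      rcases u' with p2 | y
      · obtain ⟨d, hlen, hsup⟩ := ih'.1 p2 rfl
        refine ⟨p2, d, h, ?_, ?_, ?_⟩
        · rw [Walk.edges_cons]; exact List.mem_cons_self
        · rw [Walk.length_cons]; omega
        · simp [Walk.support_cons, hsup, List.filterMap_cons]
      · exact h.elim

lemma projR (X : Set ℕ) (hpos : ∀ x ∈ X, 0 < x) {u v : ↥(rho X) ⊕ ↥(Xstar X)}
    (w : (BGraph X).Walk u v) (ht : w.IsTrail) :
    ∀ y : ↥(Xstar X), v = Sum.inr y →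
      (∀ x, u = Sum.inr x → ∃ d : (GammaGraph X).Walk x y,
        2 * d.length = w.length ∧ d.support = w.support.filterMap Sum.getRight?) ∧
      (∀ p, u = Sum.inl p → ∃ (x' : ↥(Xstar X)) (d : (GammaGraph X).Walk x' y),
        (↑p : ℕ) ∣ (↑x' : ℕ) ∧ s(Sum.inl p, Sum.inr x') ∈ w.edges ∧
        2 * d.length + 1 = w.length ∧ d.support = w.support.filterMap Sum.getRight?) := by
  induction w with
  | nil =>
    intro y hy
    constructor
    · intro x hx
      subst hy
      obtain rfl : y = x := Sum.inr.inj hx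
      exact ⟨Walk.nil, by simp, by simp⟩
    · intro p hp
      rw [hp] at hy
      simp at hy
  | @cons u u' v h w ih =>
    intro y hy
    have ih' := ih ht.of_cons y hy
    constructor
    · rintro x rfl
      rcases u' with p | x2
      · obtain ⟨x', d, hdvd, hedge, hlen, hsup⟩ := ih'.2 p rfl
        have hxx' : x ≠ x' := by
          rintro rfl
          have hmem : s(Sum.inr x, Sum.inl p) ∈ w.edges := by
            rwa [Sym2.eq_swap] at hedge
          exact ((Walk.isTrail_cons h w).mp ht).2 hmem
        have hadj : (GammaGraph X).Adj x x' := by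
          refine ⟨hxx', ?_⟩
          have hg : (↑p : ℕ) ∣ Nat.gcd ↑x ↑x' := Nat.dvd_gcd h hdvd
          have hgpos : 0 < Nat.gcd (↑x : ℕ) ↑x' :=
            Nat.gcd_pos_of_pos_left _ (hpos _ x.2.1)
          exact lt_of_lt_of_le p.2.1.one_lt (Nat.le_of_dvd hgpos hg)
        refine ⟨Walk.cons hadj d, ?_, ?_⟩
        · rw [Walk.length_cons, Walk.length_cons]; omega
        · simp [Walk.support_cons, hsup]
      · exact h.elim
    · rintro p rfl
      rcases u' with p2 | x'
      · exact h.elim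
      · obtain ⟨d, hlen, hsup⟩ := ih'.1 x' rfl
        refine ⟨x', d, h, ?_, ?_, ?_⟩
        · rw [Walk.edges_cons]; exact List.mem_cons_self
        · rw [Walk.length_cons]; omega
        · simp [Walk.support_cons, hsup, List.filterMap_cons]

theorem stmt_6 (X : Set ℕ) (hne : X.Nonempty) (hpos : ∀ x ∈ X, 0 < x)
    (hX1 : X ≠ {1})
    (hcyc : ∃ (v : ↥(rho X) ⊕ ↥(Xstar X)) (w : (BGraph X).Walk v v),
      w.IsCycle ∧ 4 < w.length) :
    (∃ (p : ↥(rho X)) (c : (DeltaGraph X).Walk p p), c.IsCycle) ∧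
    (∃ (x : ↥(Xstar X)) (c : (GammaGraph X).Walk x x), c.IsCycle) := by
  obtain ⟨v, w, hw, hlen⟩ := hcyc
  have hex : (∃ p, Sum.inl p ∈ w.support) ∧ (∃ x, Sum.inr x ∈ w.support) := by
    cases w with
    | nil => simp at hlen
    | @cons _ u' _ h w' =>
      rcases v with p | x <;> rcases u' with p' | x'
      · exact h.elim
      · refine ⟨⟨p, Walk.start_mem_support _⟩, ⟨x', ?_⟩⟩
        rw [Walk.support_cons]
        exact List.mem_cons_of_mem _ w'.start_mem_support
      · refine ⟨⟨p', ?_⟩, ⟨x, Walk.start_mem_support _⟩⟩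
        rw [Walk.support_cons]
        exact List.mem_cons_of_mem _ w'.start_mem_support
      · exact h.elim
  obtain ⟨⟨p0, hp0⟩, ⟨x0, hx0⟩⟩ := hex
  have filterL : ∀ (a a' : ↥(rho X) ⊕ ↥(Xstar X)) (b : ↥(rho X)),
      b ∈ Sum.getLeft? a → b ∈ Sum.getLeft? a' → a = a' := by
    rintro (a | a) (a' | a') b h1 h2 <;> simp_all
  have filterR : ∀ (a a' : ↥(rho X) ⊕ ↥(Xstar X)) (b : ↥(Xstar X)),
      b ∈ Sum.getRight? a → b ∈ Sum.getRight? a' → a = a' := by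
    rintro (a | a) (a' | a') b h1 h2 <;> simp_all
  constructor
  · set c := w.rotate _ hp0 with hcdef
    have hc : c.IsCycle := hw.rotate hp0
    have hlc : c.length = w.length := by
      calc c.length = c.edges.length := (Walk.length_edges c).symm
        _ = w.edges.length := (w.rotate_edges _ hp0).perm.length_eq
        _ = w.length := Walk.length_edges w
    obtain ⟨d, hdl, hds⟩ := (projL X c hc.isTrail p0 rfl).1 p0 rfl
    have h3 : 3 ≤ d.length := by omega
    refine ⟨p0, d, closed_isCycle d h3 ?_⟩
    have key : d.support = p0 :: c.support.tail.filterMap Sum.getLeft? := by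
      rw [hds]
      conv_lhs => rw [c.support_eq_cons]
      simp [-Walk.cons_tail_support]
    rw [key, List.tail_cons]
    exact List.Nodup.filterMap filterL hc.support_nodup
  · set c := w.rotate _ hx0 with hcdef
    have hc : c.IsCycle := hw.rotate hx0
    have hlc : c.length = w.length := by
      calc c.length = c.edges.length := (Walk.length_edges c).symm
        _ = w.edges.length := (w.rotate_edges _ hx0).perm.length_eq
        _ = w.length := Walk.length_edges w
    obtain ⟨d, hdl, hds⟩ := (projR X hpos c hc.isTrail x0 rfl).1 x0 rfl
    have h3 : 3 ≤ d.length := by omega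
    refine ⟨x0, d, closed_isCycle d h3 ?_⟩
    have key : d.support = x0 :: c.support.tail.filterMap Sum.getRight? := by
      rw [hds]
      conv_lhs => rw [c.support_eq_cons]
      simp [-Walk.cons_tail_support]
    rw [key, List.tail_cons]
    exact List.Nodup.filterMap filterR hc.support_nodup
end

section
/- At least one of the graphs Δ(X), Γ(X) contains a triangle (a complete subgraph on 3 vertices) if and only if B(X) contains an induced subgraph isomorphic to the 6-cycle C6 or an induced subgraph isomorphic to the complete bipartite graph K_{1,3}. -/
open SimpleGraph

lemma BGraph_adj_ll {X : Set ℕ} {p q : ↥(rho X)} :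
    ¬ (BGraph X).Adj (Sum.inl p) (Sum.inl q) := fun h => h

lemma BGraph_adj_rr {X : Set ℕ} {x y : ↥(Xstar X)} :
    ¬ (BGraph X).Adj (Sum.inr x) (Sum.inr y) := fun h => h

lemma BGraph_adj_lr {X : Set ℕ} {p : ↥(rho X)} {x : ↥(Xstar X)} :
    (BGraph X).Adj (Sum.inl p) (Sum.inr x) ↔ (p : ℕ) ∣ (x : ℕ) := Iff.rfl

lemma BGraph_adj_rl {X : Set ℕ} {p : ↥(rho X)} {x : ↥(Xstar X)} :
    (BGraph X).Adj (Sum.inr x) (Sum.inl p) ↔ (p : ℕ) ∣ (x : ℕ) := Iff.rfl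

lemma BGraph_adj_ll' {X : Set ℕ} {p q : ↥(rho X)} :
    (BGraph X).Adj (Sum.inl p) (Sum.inl q) ↔ False := iff_false_intro (fun h => h)

lemma BGraph_adj_rr' {X : Set ℕ} {x y : ↥(Xstar X)} :
    (BGraph X).Adj (Sum.inr x) (Sum.inr y) ↔ False := iff_false_intro (fun h => h)

lemma one_lt_gcd {p x y : ℕ} (hp : p.Prime) (hx : 0 < x)
    (h1 : p ∣ x) (h2 : p ∣ y) : 1 < Nat.gcd x y :=
  lt_of_lt_of_le hp.one_lt (Nat.le_of_dvd (Nat.gcd_pos_of_pos_left y hx) (Nat.dvd_gcd h1 h2))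

/-- helper: a function on `Fin 6` given by six values -/
def v6 {α : Type*} (a b c d e f : α) : Fin 6 → α
  | 0 => a | 1 => b | 2 => c | 3 => d | 4 => e | 5 => f

/-- helper: a function on `Fin 1 ⊕ Fin 3` given by four values -/
def k4 {α : Type*} (c a b d : α) : Fin 1 ⊕ Fin 3 → α
  | .inl _ => c | .inr 0 => a | .inr 1 => b | .inr 2 => d

set_option maxHeartbeats 2000000 in
lemma aux_C6 {X : Set ℕ} (P Q R : ↥(rho X)) (A B C : ↥(Xstar X))
    (hPA : (P:ℕ) ∣ A) (hQA : (Q:ℕ) ∣ A) (hQB : (Q:ℕ) ∣ B) (hRB : (R:ℕ) ∣ B)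
    (hRC : (R:ℕ) ∣ C) (hPC : (P:ℕ) ∣ C)
    (hRA : ¬ (R:ℕ) ∣ A) (hPB : ¬ (P:ℕ) ∣ B) (hQC : ¬ (Q:ℕ) ∣ C) :
    Nonempty (SimpleGraph.cycleGraph 6 ↪g BGraph X) := by
  have hPQ : P ≠ Q := fun h => hQC (h ▸ hPC)
  have hPR : P ≠ R := fun h => hRA (h ▸ hPA)
  have hQR : Q ≠ R := fun h => hRA (h ▸ hQA)
  have hAB : A ≠ B := fun h => hPB (h ▸ hPA)
  have hBC : B ≠ C := fun h => hQC (h ▸ hQB)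
  have hAC : A ≠ C := fun h => hQC (h ▸ hQA)
  refine ⟨⟨⟨v6 (Sum.inl P) (Sum.inr A) (Sum.inl Q) (Sum.inr B) (Sum.inl R) (Sum.inr C), ?_⟩, ?_⟩⟩
  · intro i j h
    fin_cases i <;> fin_cases j <;> simp_all [v6]
  · intro i j
    fin_cases i <;> fin_cases j <;>
      simp only [v6, Function.Embedding.coeFn_mk, BGraph_adj_lr, BGraph_adj_rl,
        BGraph_adj_ll', BGraph_adj_rr', SimpleGraph.cycleGraph_adj'] <;>
      first
        | exact iff_of_false (fun h => h) (by decide)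
        | exact iff_of_true hPA (by decide)
        | exact iff_of_true hQA (by decide)
        | exact iff_of_true hQB (by decide)
        | exact iff_of_true hRB (by decide)
        | exact iff_of_true hRC (by decide)
        | exact iff_of_true hPC (by decide)
        | exact iff_of_false hRA (by decide)
        | exact iff_of_false hPB (by decide)
        | exact iff_of_false hQC (by decide)

lemma aux_K13a {X : Set ℕ} (p : ↥(rho X)) (x y z : ↥(Xstar X))
    (hxy : x ≠ y) (hxz : x ≠ z) (hyz : y ≠ z)
    (h1 : (p:ℕ) ∣ x) (h2 : (p:ℕ) ∣ y) (h3 : (p:ℕ) ∣ z) :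
    Nonempty (completeBipartiteGraph (Fin 1) (Fin 3) ↪g BGraph X) := by
  refine ⟨⟨⟨k4 (Sum.inl p) (Sum.inr x) (Sum.inr y) (Sum.inr z), ?_⟩, ?_⟩⟩
  · rintro (i | i) (j | j) h
    · simp [Fin.eq_zero i, Fin.eq_zero j]
    · fin_cases j <;> simp_all [k4]
    · fin_cases i <;> simp_all [k4]
    · fin_cases i <;> fin_cases j <;> simp_all [k4]
  · rintro (i | i) (j | j) <;>
      [skip; fin_cases j; fin_cases i; (fin_cases i <;> fin_cases j)] <;>
      simp [k4, completeBipartiteGraph, BGraph_adj_ll, BGraph_adj_rr,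
        BGraph_adj_lr, BGraph_adj_rl, Function.Embedding.coeFn_mk, RelEmbedding.coe_mk] <;>
      first | assumption | exact fun h => h

lemma aux_K13b {X : Set ℕ} (w : ↥(Xstar X)) (p q r : ↥(rho X))
    (hpq : p ≠ q) (hpr : p ≠ r) (hqr : q ≠ r)
    (h1 : (p:ℕ) ∣ w) (h2 : (q:ℕ) ∣ w) (h3 : (r:ℕ) ∣ w) :
    Nonempty (completeBipartiteGraph (Fin 1) (Fin 3) ↪g BGraph X) := by
  refine ⟨⟨⟨k4 (Sum.inr w) (Sum.inl p) (Sum.inl q) (Sum.inl r), ?_⟩, ?_⟩⟩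
  · rintro (i | i) (j | j) h
    · simp [Fin.eq_zero i, Fin.eq_zero j]
    · fin_cases j <;> simp_all [k4]
    · fin_cases i <;> simp_all [k4]
    · fin_cases i <;> fin_cases j <;> simp_all [k4]
  · rintro (i | i) (j | j) <;>
      [skip; fin_cases j; fin_cases i; (fin_cases i <;> fin_cases j)] <;>
      simp [k4, completeBipartiteGraph, BGraph_adj_ll, BGraph_adj_rr,
        BGraph_adj_lr, BGraph_adj_rl, Function.Embedding.coeFn_mk, RelEmbedding.coe_mk] <;>
      first | assumption | exact fun h => h

lemma delta_adj_of {X : Set ℕ} (p q : ↥(rho X)) (w : ℕ) (hw : w ∈ X) (hpq : p ≠ q)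
    (h1 : (p:ℕ) ∣ w) (h2 : (q:ℕ) ∣ w) : (DeltaGraph X).Adj p q :=
  ⟨hpq, w, hw, Nat.Coprime.mul_dvd_of_dvd_of_dvd
    ((Nat.coprime_primes p.2.1 q.2.1).mpr (fun h => hpq (Subtype.ext h))) h1 h2⟩

lemma gamma_adj_of {X : Set ℕ} (x y : ↥(Xstar X)) (p : ℕ) (hp : p.Prime)
    (hx : 0 < (x:ℕ)) (hxy : x ≠ y) (h1 : p ∣ (x:ℕ)) (h2 : p ∣ (y:ℕ)) :
    (GammaGraph X).Adj x y := ⟨hxy, one_lt_gcd hp hx h1 h2⟩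

theorem stmt_9 (X : Set ℕ) (hne : X.Nonempty) (hpos : ∀ x ∈ X, 0 < x)
    (hX1 : X ≠ {1}) :
    ((∃ p q r : ↥(rho X),
        (DeltaGraph X).Adj p q ∧ (DeltaGraph X).Adj q r ∧ (DeltaGraph X).Adj p r) ∨
     (∃ x y z : ↥(Xstar X),
        (GammaGraph X).Adj x y ∧ (GammaGraph X).Adj y z ∧ (GammaGraph X).Adj x z)) ↔
    (Nonempty (SimpleGraph.cycleGraph 6 ↪g BGraph X) ∨
     Nonempty (completeBipartiteGraph (Fin 1) (Fin 3) ↪g BGraph X)) := by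
  constructor
  · rintro (⟨p, q, r, ⟨hpq, x, hxX, hx⟩, ⟨hqr, y, hyX, hy⟩, ⟨hpr, z, hzX, hz⟩⟩ |
            ⟨x, y, z, ⟨hxy, gxy⟩, ⟨hyz, gyz⟩, ⟨hxz, gxz⟩⟩)
    · -- Δ triangle
      have hpx : (p:ℕ) ∣ x := (dvd_mul_right _ _).trans hx
      have hqx : (q:ℕ) ∣ x := (dvd_mul_left _ _).trans hx
      have hqy : (q:ℕ) ∣ y := (dvd_mul_right _ _).trans hy
      have hry : (r:ℕ) ∣ y := (dvd_mul_left _ _).trans hy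
      have hpz : (p:ℕ) ∣ z := (dvd_mul_right _ _).trans hz
      have hrz : (r:ℕ) ∣ z := (dvd_mul_left _ _).trans hz
      have hx1 : x ≠ 1 := fun h => p.2.1.ne_one (Nat.dvd_one.mp (h ▸ hpx))
      have hy1 : y ≠ 1 := fun h => q.2.1.ne_one (Nat.dvd_one.mp (h ▸ hqy))
      have hz1 : z ≠ 1 := fun h => p.2.1.ne_one (Nat.dvd_one.mp (h ▸ hpz))
      by_cases hrx : (r:ℕ) ∣ x
      · exact Or.inr (aux_K13b ⟨x, hxX, hx1⟩ p q r hpq hpr hqr hpx hqx hrx)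
      by_cases hpy : (p:ℕ) ∣ y
      · exact Or.inr (aux_K13b ⟨y, hyX, hy1⟩ p q r hpq hpr hqr hpy hqy hry)
      by_cases hqz : (q:ℕ) ∣ z
      · exact Or.inr (aux_K13b ⟨z, hzX, hz1⟩ p q r hpq hpr hqr hpz hqz hrz)
      exact Or.inl (aux_C6 p q r ⟨x, hxX, hx1⟩ ⟨y, hyX, hy1⟩ ⟨z, hzX, hz1⟩
        hpx hqx hqy hry hrz hpz hrx hpy hqz)
    · -- Γ triangle
      obtain ⟨p, hp, hpd⟩ := Nat.exists_prime_and_dvd (n := Nat.gcd x y) gxy.ne'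
      obtain ⟨q, hq, hqd⟩ := Nat.exists_prime_and_dvd (n := Nat.gcd y z) gyz.ne'
      obtain ⟨r, hr, hrd⟩ := Nat.exists_prime_and_dvd (n := Nat.gcd x z) gxz.ne'
      have hpx : p ∣ (x:ℕ) := hpd.trans (Nat.gcd_dvd_left _ _)
      have hpy : p ∣ (y:ℕ) := hpd.trans (Nat.gcd_dvd_right _ _)
      have hqy : q ∣ (y:ℕ) := hqd.trans (Nat.gcd_dvd_left _ _)
      have hqz : q ∣ (z:ℕ) := hqd.trans (Nat.gcd_dvd_right _ _)
      have hrx : r ∣ (x:ℕ) := hrd.trans (Nat.gcd_dvd_left _ _)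
      have hrz : r ∣ (z:ℕ) := hrd.trans (Nat.gcd_dvd_right _ _)
      have hpρ : p ∈ rho X := ⟨hp, x, x.2.1, hpx⟩
      have hqρ : q ∈ rho X := ⟨hq, y, y.2.1, hqy⟩
      have hrρ : r ∈ rho X := ⟨hr, x, x.2.1, hrx⟩
      by_cases hpz : p ∣ (z:ℕ)
      · exact Or.inr (aux_K13a ⟨p, hpρ⟩ x y z hxy hxz hyz hpx hpy hpz)
      by_cases hqx : q ∣ (x:ℕ)
      · exact Or.inr (aux_K13a ⟨q, hqρ⟩ x y z hxy hxz hyz hqx hqy hqz)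
      by_cases hry : r ∣ (y:ℕ)
      · exact Or.inr (aux_K13a ⟨r, hrρ⟩ x y z hxy hxz hyz hrx hry hrz)
      exact Or.inl (aux_C6 ⟨r, hrρ⟩ ⟨p, hpρ⟩ ⟨q, hqρ⟩ x y z
        hrx hpx hpy hqy hqz hrz hqx hry hpz)
  · rintro (hf | hg)
    · -- induced C6
      obtain ⟨f⟩ := hf
      have h01 := f.map_rel_iff.mpr (show (SimpleGraph.cycleGraph 6).Adj 0 1 by decide)
      have h12 := f.map_rel_iff.mpr (show (SimpleGraph.cycleGraph 6).Adj 1 2 by decide)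
      have h23 := f.map_rel_iff.mpr (show (SimpleGraph.cycleGraph 6).Adj 2 3 by decide)
      have h34 := f.map_rel_iff.mpr (show (SimpleGraph.cycleGraph 6).Adj 3 4 by decide)
      have h45 := f.map_rel_iff.mpr (show (SimpleGraph.cycleGraph 6).Adj 4 5 by decide)
      have h50 := f.map_rel_iff.mpr (show (SimpleGraph.cycleGraph 6).Adj 5 0 by decide)
      have hinj := f.injective
      rcases hf0 : f 0 with p | x
      · rcases hf1 : f 1 with q | x
        · rw [hf0, hf1] at h01; exact (BGraph_adj_ll h01).elim
        rcases hf2 : f 2 with q | y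
        swap
        · rw [hf1, hf2] at h12; exact (BGraph_adj_rr h12).elim
        rcases hf3 : f 3 with s | y
        · rw [hf2, hf3] at h23; exact (BGraph_adj_ll h23).elim
        rcases hf4 : f 4 with r | w
        swap
        · rw [hf3, hf4] at h34; exact (BGraph_adj_rr h34).elim
        rcases hf5 : f 5 with s | z
        · rw [hf4, hf5] at h45; exact (BGraph_adj_ll h45).elim
        rw [hf0, hf1] at h01
        rw [hf1, hf2] at h12
        rw [hf2, hf3] at h23
        rw [hf3, hf4] at h34
        rw [hf4, hf5] at h45
        rw [hf5, hf0] at h50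
        have hpq : p ≠ q := by
          have := hinj.ne (show (0:Fin 6) ≠ 2 by decide)
          rw [hf0, hf2] at this
          exact fun h => this (congrArg Sum.inl h)
        have hqr : q ≠ r := by
          have := hinj.ne (show (2:Fin 6) ≠ 4 by decide)
          rw [hf2, hf4] at this
          exact fun h => this (congrArg Sum.inl h)
        have hpr : p ≠ r := by
          have := hinj.ne (show (0:Fin 6) ≠ 4 by decide)
          rw [hf0, hf4] at this
          exact fun h => this (congrArg Sum.inl h)
        exact Or.inl ⟨p, q, r,
          delta_adj_of p q x x.2.1 hpq h01 h12,
          delta_adj_of q r y y.2.1 hqr h23 h34,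
          delta_adj_of p r z z.2.1 hpr h50 h45⟩
      · rcases hf1 : f 1 with p | y
        swap
        · rw [hf0, hf1] at h01; exact (BGraph_adj_rr h01).elim
        rcases hf2 : f 2 with s | y
        · rw [hf1, hf2] at h12; exact (BGraph_adj_ll h12).elim
        rcases hf3 : f 3 with q | w
        swap
        · rw [hf2, hf3] at h23; exact (BGraph_adj_rr h23).elim
        rcases hf4 : f 4 with s | z
        · rw [hf3, hf4] at h34; exact (BGraph_adj_ll h34).elim
        rcases hf5 : f 5 with r | w
        swap
        · rw [hf4, hf5] at h45; exact (BGraph_adj_rr h45).elim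
        rw [hf0, hf1] at h01
        rw [hf1, hf2] at h12
        rw [hf2, hf3] at h23
        rw [hf3, hf4] at h34
        rw [hf4, hf5] at h45
        rw [hf5, hf0] at h50
        have hxy : x ≠ y := by
          have := hinj.ne (show (0:Fin 6) ≠ 2 by decide)
          rw [hf0, hf2] at this
          exact fun h => this (congrArg Sum.inr h)
        have hyz : y ≠ z := by
          have := hinj.ne (show (2:Fin 6) ≠ 4 by decide)
          rw [hf2, hf4] at this
          exact fun h => this (congrArg Sum.inr h)
        have hxz : x ≠ z := by
          have := hinj.ne (show (0:Fin 6) ≠ 4 by decide)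
          rw [hf0, hf4] at this
          exact fun h => this (congrArg Sum.inr h)
        have hx0 : 0 < (x:ℕ) := hpos _ x.2.1
        have hy0 : 0 < (y:ℕ) := hpos _ y.2.1
        exact Or.inr ⟨x, y, z,
          gamma_adj_of x y p p.2.1 hx0 hxy h01 h12,
          gamma_adj_of y z q q.2.1 hy0 hyz h23 h34,
          gamma_adj_of x z r r.2.1 hx0 hxz h50 h45⟩
    · -- induced K_{1,3}
      obtain ⟨g⟩ := hg
      have ha0 := g.map_rel_iff.mpr
        (show (completeBipartiteGraph (Fin 1) (Fin 3)).Adj (Sum.inl 0) (Sum.inr 0) from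
          Or.inl ⟨rfl, rfl⟩)
      have ha1 := g.map_rel_iff.mpr
        (show (completeBipartiteGraph (Fin 1) (Fin 3)).Adj (Sum.inl 0) (Sum.inr 1) from
          Or.inl ⟨rfl, rfl⟩)
      have ha2 := g.map_rel_iff.mpr
        (show (completeBipartiteGraph (Fin 1) (Fin 3)).Adj (Sum.inl 0) (Sum.inr 2) from
          Or.inl ⟨rfl, rfl⟩)
      have hinj := g.injective
      rcases hg : g (Sum.inl 0) with p | w
      · rcases hg0 : g (Sum.inr 0) with q | x
        · rw [hg, hg0] at ha0; exact (BGraph_adj_ll ha0).elim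
        rcases hg1 : g (Sum.inr 1) with q | y
        · rw [hg, hg1] at ha1; exact (BGraph_adj_ll ha1).elim
        rcases hg2 : g (Sum.inr 2) with q | z
        · rw [hg, hg2] at ha2; exact (BGraph_adj_ll ha2).elim
        rw [hg, hg0] at ha0
        rw [hg, hg1] at ha1
        rw [hg, hg2] at ha2
        have hxy : x ≠ y := by
          have := hinj.ne (show (Sum.inr 0 : Fin 1 ⊕ Fin 3) ≠ Sum.inr 1 by decide)
          rw [hg0, hg1] at this
          exact fun h => this (congrArg Sum.inr h)
        have hyz : y ≠ z := by
          have := hinj.ne (show (Sum.inr 1 : Fin 1 ⊕ Fin 3) ≠ Sum.inr 2 by decide)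
          rw [hg1, hg2] at this
          exact fun h => this (congrArg Sum.inr h)
        have hxz : x ≠ z := by
          have := hinj.ne (show (Sum.inr 0 : Fin 1 ⊕ Fin 3) ≠ Sum.inr 2 by decide)
          rw [hg0, hg2] at this
          exact fun h => this (congrArg Sum.inr h)
        have hx0 : 0 < (x:ℕ) := hpos _ x.2.1
        have hy0 : 0 < (y:ℕ) := hpos _ y.2.1
        exact Or.inr ⟨x, y, z,
          gamma_adj_of x y p p.2.1 hx0 hxy ha0 ha1,
          gamma_adj_of y z p p.2.1 hy0 hyz ha1 ha2,
          gamma_adj_of x z p p.2.1 hx0 hxz ha0 ha2⟩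
      · rcases hg0 : g (Sum.inr 0) with p | u
        swap
        · rw [hg, hg0] at ha0; exact (BGraph_adj_rr ha0).elim
        rcases hg1 : g (Sum.inr 1) with q | u
        swap
        · rw [hg, hg1] at ha1; exact (BGraph_adj_rr ha1).elim
        rcases hg2 : g (Sum.inr 2) with r | u
        swap
        · rw [hg, hg2] at ha2; exact (BGraph_adj_rr ha2).elim
        rw [hg, hg0] at ha0
        rw [hg, hg1] at ha1
        rw [hg, hg2] at ha2
        have hpq : p ≠ q := by
          have := hinj.ne (show (Sum.inr 0 : Fin 1 ⊕ Fin 3) ≠ Sum.inr 1 by decide)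
          rw [hg0, hg1] at this
          exact fun h => this (congrArg Sum.inl h)
        have hqr : q ≠ r := by
          have := hinj.ne (show (Sum.inr 1 : Fin 1 ⊕ Fin 3) ≠ Sum.inr 2 by decide)
          rw [hg1, hg2] at this
          exact fun h => this (congrArg Sum.inl h)
        have hpr : p ≠ r := by
          have := hinj.ne (show (Sum.inr 0 : Fin 1 ⊕ Fin 3) ≠ Sum.inr 2 by decide)
          rw [hg0, hg2] at this
          exact fun h => this (congrArg Sum.inl h)
        exact Or.inl ⟨p, q, r,
          delta_adj_of p q w w.2.1 hpq ha0 ha1,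
          delta_adj_of q r w w.2.1 hqr ha1 ha2,
          delta_adj_of p r w w.2.1 hpr ha0 ha2⟩
end
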